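/- Let a and b be coprime positive integers and suppose the rational number a/b has continued fraction expansion a/b = [c_0; c_1, c_2, …, c_{k−1}, c_k + 1] (i.e., the expansion of a/b whose last partial quotient has been written as c_k + 1). Then gen(a,b) = A^{c_0} ∘ B^{c_1} ∘ A^{c_2} ∘ ⋯, the concatenation of blocks of c_0 letters A, c_1 letters B, c_2 letters A, and so on in alternation. -/

import Mathlib

/-- `P s` is the number of distinct subsequences of the binary word `s`
(the letter `A` is `true`, the letter `B` is `false`), including the empty one. -/
def P (s : List Bool) : ℕ := s.sublists.toFinset.card

/-- `PA s` is the number of distinct subsequences of `s` starting with `A` (= `true`),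
plus one for the empty subsequence. -/
def PA (s : List Bool) : ℕ :=
  ((s.sublists.toFinset).filter (fun t => t.head? = some true)).card + 1

/-- `PB s` is the number of distinct subsequences of `s` starting with `B` (= `false`),
plus one for the empty subsequence. -/
def PB (s : List Bool) : ℕ :=
  ((s.sublists.toFinset).filter (fun t => t.head? = some false)).card + 1

/-- `QA s` is the number of distinct subsequences of `s` ending with `A` (= `true`),
plus one for the empty subsequence. -/
def QA (s : List Bool) : ℕ :=
  ((s.sublists.toFinset).filter (fun t => t.getLast? = some true)).card + 1

/-- `QB s` is the number of distinct subsequences of `s` ending with `B` (= `false`),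
plus one for the empty subsequence. -/
def QB (s : List Bool) : ℕ :=
  ((s.sublists.toFinset).filter (fun t => t.getLast? = some false)).card + 1

/-- The word `gen a b`, defined by the Euclidean recursion:
`gen 1 1 = []`, `gen a b = A ∘ gen (a-b) b` if `a > b`, `gen a b = B ∘ gen a (b-a)` if `b > a`. -/
def gen : ℕ → ℕ → List Bool
  | 0, _ => []
  | _ + 1, 0 => []
  | a + 1, b + 1 =>
    if a > b then true :: gen (a - b) (b + 1)
    else if b > a then false :: gen (a + 1) (b - a)
    else []
termination_by a b => a + b
decreasing_by all_goals omega

/-- `star s` swaps all letters `A` and `B` in `s`. -/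
def star (s : List Bool) : List Bool := s.map (fun x => !x)

/-- `z n` is the alternating word `ABAB…` of length `n`. -/
def z : ℕ → List Bool
  | 0 => []
  | n + 1 => true :: star (z n)

/-- The value of the finite simple continued fraction `[c₀; c₁, …, cₘ]`. -/
def cfVal : List ℕ → ℚ
  | [] => 0
  | [c] => (c : ℚ)
  | c :: rest => (c : ℚ) + 1 / cfVal rest

/-- Increment the last entry of a list. -/
def lastInc : List ℕ → List ℕ
  | [] => []
  | [c] => [c + 1]
  | c :: rest => c :: lastInc rest

/-- `blocks ltr [c₀, c₁, …]` is the word `ltr^{c₀} ∘ (!ltr)^{c₁} ∘ ltr^{c₂} ∘ ⋯`. -/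
def blocks : Bool → List ℕ → List Bool
  | _, [] => []
  | ltr, c :: rest => List.replicate c ltr ++ blocks (!ltr) rest

lemma gen_gt {a b : ℕ} (hb : 0 < b) (h : b < a) : gen a b = true :: gen (a - b) b := by
  obtain ⟨a', rfl⟩ : ∃ a', a = a' + 1 := ⟨a - 1, by omega⟩
  obtain ⟨b', rfl⟩ : ∃ b', b = b' + 1 := ⟨b - 1, by omega⟩
  rw [gen, if_pos (by omega)]
  congr 2
  omega

lemma gen_lt {a b : ℕ} (ha : 0 < a) (h : a < b) : gen a b = false :: gen a (b - a) := by
  obtain ⟨a', rfl⟩ : ∃ a', a = a' + 1 := ⟨a - 1, by omega⟩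
  obtain ⟨b', rfl⟩ : ∃ b', b = b' + 1 := ⟨b - 1, by omega⟩
  rw [gen, if_neg (by omega), if_pos (by omega)]
  congr 2
  omega

lemma gen_one_one : gen 1 1 = [] := by rw [gen]; rfl

lemma star_nil : star [] = [] := rfl

lemma star_cons (x : Bool) (s : List Bool) : star (x :: s) = (!x) :: star s := rfl

lemma star_append (s t : List Bool) : star (s ++ t) = star s ++ star t :=
  List.map_append

lemma star_replicate (n : ℕ) (x : Bool) :
    star (List.replicate n x) = List.replicate n (!x) := List.map_replicate

lemma gen_swap_aux : ∀ n a b : ℕ, a + b ≤ n → gen b a = star (gen a b) := by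
  intro n
  induction n with
  | zero =>
    intro a b hn
    obtain ⟨rfl, rfl⟩ : a = 0 ∧ b = 0 := by omega
    rw [gen]
    rfl
  | succ n IH =>
    intro a b hn
    rcases a with _ | a
    · rcases b with _ | b <;> simp [gen] <;> rfl
    rcases b with _ | b
    · simp [gen]; rfl
    rcases lt_trichotomy a b with h | h | h
    · have h1 : gen (b + 1) (a + 1) = true :: gen (b + 1 - (a + 1)) (a + 1) :=
        gen_gt (by omega) (by omega)
      have h2 : gen (a + 1) (b + 1) = false :: gen (a + 1) (b + 1 - (a + 1)) :=
        gen_lt (by omega) (by omega)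
      rw [h1, h2, star_cons, IH (a + 1) (b + 1 - (a + 1)) (by omega)]
      rfl
    · subst h
      rw [gen, if_neg (by omega), if_neg (by omega)]
      rfl
    · have h1 : gen (b + 1) (a + 1) = false :: gen (b + 1) (a + 1 - (b + 1)) :=
        gen_lt (by omega) (by omega)
      have h2 : gen (a + 1) (b + 1) = true :: gen (a + 1 - (b + 1)) (b + 1) :=
        gen_gt (by omega) (by omega)
      rw [h1, h2, star_cons, IH (a + 1 - (b + 1)) (b + 1) (by omega)]
      rfl

lemma gen_swap (a b : ℕ) : gen b a = star (gen a b) :=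
  gen_swap_aux (a + b) a b le_rfl

lemma lastInc_ne_nil : ∀ l : List ℕ, l ≠ [] → lastInc l ≠ []
  | [c], _ => by simp [lastInc]
  | c :: d :: t, _ => by simp [lastInc]

lemma gen_add_mul (a b c : ℕ) (ha : 0 < a) (hb : 0 < b) :
    gen (a + c * b) b = List.replicate c true ++ gen a b := by
  induction c with
  | zero => simp
  | succ c ih =>
    have h1 : a + (c + 1) * b = (a + c * b) + b := by ring
    rw [h1, gen_gt hb (by omega)]
    have h2 : a + c * b + b - b = a + c * b := by omega
    rw [h2, ih, List.replicate_succ]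
    rfl

lemma star_blocks (ltr : Bool) (cs : List ℕ) : star (blocks ltr cs) = blocks (!ltr) cs := by
  induction cs generalizing ltr with
  | nil => rfl
  | cons c rest ih =>
    show star (List.replicate c ltr ++ blocks (!ltr) rest)
        = List.replicate c (!ltr) ++ blocks (!(!ltr)) rest
    rw [star_append, star_replicate, ih]

lemma cfVal_ge_one : ∀ l : List ℕ, l ≠ [] → (∀ c ∈ l, 1 ≤ c) → 1 ≤ cfVal l
  | [c], _, h => by
      have := h c (by simp)
      show (1 : ℚ) ≤ (c : ℚ)
      exact_mod_cast this
  | c :: x :: t, _, h => by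
      have h1 : 1 ≤ cfVal (x :: t) :=
        cfVal_ge_one (x :: t) (by simp) (fun d hd => h d (by simp [hd]))
      have hc : (1 : ℚ) ≤ c := by exact_mod_cast h c (by simp)
      have : 0 ≤ 1 / cfVal (x :: t) := by positivity
      show 1 ≤ (c : ℚ) + 1 / cfVal (x :: t)
      linarith

lemma gen_eq_blocks_aux : ∀ cs : List ℕ, cs ≠ [] → ∀ a b : ℕ, 0 < a → 0 < b →
    Nat.Coprime a b → (∀ c ∈ (lastInc cs).tail, 1 ≤ c) →
    cfVal (lastInc cs) = (a : ℚ) / (b : ℚ) → gen a b = blocks true cs := by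
  intro cs
  induction cs with
  | nil => intro h; exact absurd rfl h
  | cons c rest ih =>
    intro _ a b ha hb hab htail hval
    rcases rest with _ | ⟨x, t⟩
    · -- cs = [c]
      have hv : ((c : ℚ) + 1) = (a : ℚ) / b := by
        simpa [lastInc, cfVal] using hval
      have hb0 : (0 : ℚ) < b := by exact_mod_cast hb
      have hq : (a : ℚ) = ((c : ℚ) + 1) * b := by
        field_simp at hv
        linarith
      have haN : a = (c + 1) * b := by exact_mod_cast hq
      have hb1 : b = 1 := by
        have hdvd : b ∣ a := ⟨c + 1, by rw [haN]; ring⟩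
        exact Nat.Coprime.eq_one_of_dvd hab.symm hdvd
      subst hb1
      have hac : a = 1 + c * 1 := by omega
      rw [hac, gen_add_mul 1 1 c (by omega) (by omega), gen_one_one]
      simp [blocks]
    · -- cs = c :: (x :: t)
      set rest := x :: t with hrest
      have hrest_ne : rest ≠ [] := by simp [hrest]
      have hLI : lastInc (c :: rest) = c :: lastInc rest := rfl
      have hLIrest_ne : lastInc rest ≠ [] := lastInc_ne_nil rest hrest_ne
      have htail' : ∀ d ∈ lastInc rest, 1 ≤ d := by
        intro d hd; exact htail d (by rw [hLI]; simpa using hd)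
      set r := cfVal (lastInc rest) with hr
      have hr1 : 1 ≤ r := cfVal_ge_one _ hLIrest_ne htail'
      have hr0 : 0 < r := by linarith
      set p := r.num.toNat with hp
      set q := r.den with hq
      have hp0 : 0 < p := by
        have : 0 < r.num := Rat.num_pos.mpr hr0
        omega
      have hq0 : 0 < q := r.pos
      have hpq_cop : Nat.Coprime p q := by
        have hred := r.reduced
        have hnum : r.num.natAbs = p := by
          have : 0 ≤ r.num := le_of_lt (Rat.num_pos.mpr hr0)
          omega
        rwa [hnum] at hred
      have hpq : (p : ℚ) / q = r := by
        rw [hp, hq]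
        have hcast : ((r.num.toNat : ℤ) : ℚ) = (r.num : ℚ) := by
          congr 1
          exact Int.toNat_of_nonneg (le_of_lt (Rat.num_pos.mpr hr0))
        push_cast at hcast ⊢
        rw [hcast]
        exact Rat.num_div_den r
      have hval' : (c : ℚ) + 1 / r = (a : ℚ) / b := by
        rw [← hval, hLI]
        obtain ⟨y, s, hys⟩ : ∃ y s, lastInc rest = y :: s := by
          rcases hh : lastInc rest with _ | ⟨y, s⟩
          · exact absurd hh hLIrest_ne
          · exact ⟨y, s, rfl⟩
        rw [hr, hys]
        rfl
      have hb0 : (0 : ℚ) < b := by exact_mod_cast hb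
      have hp0' : (0 : ℚ) < p := by exact_mod_cast hp0
      have hq0' : (0 : ℚ) < q := by exact_mod_cast hq0
      have hstep : ((c : ℚ) * p + q) / p = (a : ℚ) / b := by
        rw [← hval', ← hpq]
        field_simp
      rw [div_eq_div_iff hp0'.ne' hb0.ne'] at hstep
      have keyN : (c * p + q) * b = a * p := by exact_mod_cast hstep
      have hcop2 : Nat.Coprime (c * p + q) p := by
        rw [show c * p + q = q + p * c by ring]
        exact (Nat.coprime_add_mul_left_left q p c).mpr hpq_cop.symm
      have hbp : b = p := by
        have hb_dvd : b ∣ p := by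
          have hd : b ∣ a * p := ⟨c * p + q, by rw [← keyN]; ring⟩
          exact Nat.Coprime.dvd_of_dvd_mul_left hab.symm hd
        have hp_dvd : p ∣ b := by
          have hd : p ∣ (c * p + q) * b := by
            rw [keyN]; exact dvd_mul_left p a
          exact Nat.Coprime.dvd_of_dvd_mul_left hcop2.symm hd
        exact Nat.dvd_antisymm hb_dvd hp_dvd
      subst hbp
      have haN : a = q + c * p := by
        have h1 : (c * p + q) * p = a * p := keyN
        have h2 := Nat.eq_of_mul_eq_mul_right hp0 h1
        omega
      subst haN
      rw [gen_add_mul q p c hq0 hp0]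
      have hih : gen p q = blocks true rest :=
        ih hrest_ne p q hp0 hq0 hpq_cop
          (fun d hd => htail' d (List.mem_of_mem_tail hd)) hpq.symm
      rw [gen_swap p q, hih, star_blocks]
      show List.replicate c true ++ blocks (!true) rest = blocks true (c :: rest)
      rfl

/-- If `a/b = [c₀; c₁, …, c_{k-1}, cₖ + 1]` is a continued fraction expansion of `a/b`
(last partial quotient written as `cₖ + 1`), then
`gen(a,b) = A^{c₀} ∘ B^{c₁} ∘ A^{c₂} ∘ ⋯`. -/
theorem gen_eq_blocks (a b : ℕ) (ha : 0 < a) (hb : 0 < b) (hab : Nat.Coprime a b)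
    (cs : List ℕ) (hne : cs ≠ [])
    (htail : ∀ c ∈ (lastInc cs).tail, 1 ≤ c)
    (hval : cfVal (lastInc cs) = (a : ℚ) / (b : ℚ)) :
    gen a b = blocks true cs := by
  exact gen_eq_blocks_aux cs hne a b ha hb hab htail hval
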